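/- In a finite Coxeter group W with simple reflections S, a subword u of a word w = (s_1,...,s_m) is distinguished (i.e., the partial product u_(i) satisfies u_(i) ≤ u_(i-1)·s_i in weak order for all i) if and only if every colored reflection in inv_e(u) has even color, where the color of position j with u_j = e counts indices i < j with u_i ≠ e and s_i^{u_(i)} = s_j^{u_(j)}. -/

import Mathlib

open scoped Classical

namespace Deodhar

variable {B : Type*} {W : Type*} [Group W] {M : CoxeterMatrix B}

/-- Given a word `w` in the simple-reflection indices and a subword-selector
`f : Fin w.length → Bool` (`f j = true` means the letter at position `j` is used,
`f j = false` means it is skipped, i.e. replaced by the identity `e`), the partial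
product `u_(i) = u_1 ⋯ u_i` of the first `i` letters of the subword. -/
noncomputable def pp (cs : CoxeterSystem M W) (w : List B) (f : Fin w.length → Bool)
    (i : ℕ) : W :=
  ((((List.finRange w.length).take i)).map
    (fun j => if f j then cs.simple (w.get j) else 1)).prod

/-- The full product of the subword. -/
noncomputable def sprod (cs : CoxeterSystem M W) (w : List B)
    (f : Fin w.length → Bool) : W :=
  pp cs w f w.length

/-- The subword selected by `f` is distinguished: for each position `j`,
`ℓ(u_(j+1)) ≤ ℓ(u_(j) · s_j)`, i.e. `u_(j+1) ≤ u_(j) s_j` in weak order. -/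
def Distinguished (cs : CoxeterSystem M W) (w : List B) (f : Fin w.length → Bool) : Prop :=
  ∀ j : Fin w.length,
    cs.length (pp cs w f ((j : ℕ) + 1)) ≤ cs.length (pp cs w f (j : ℕ) * cs.simple (w.get j))

/-- The number of skips `e_u = #{j : u_j = e}`. -/
def skips (w : List B) (f : Fin w.length → Bool) : ℕ :=
  (Finset.univ.filter (fun j : Fin w.length => f j = false)).card

/-- The number of descents `d_u = #{j : u_(j+1) < u_(j)}`. -/
noncomputable def descents (cs : CoxeterSystem M W) (w : List B)
    (f : Fin w.length → Bool) : ℕ :=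
  (Finset.univ.filter (fun j : Fin w.length =>
    cs.length (pp cs w f ((j : ℕ) + 1)) < cs.length (pp cs w f (j : ℕ)))).card

/-- The reflection `s_j^{u_(j)} = u_(j) s_j u_(j)⁻¹` associated to position `j`. -/
noncomputable def reflAt (cs : CoxeterSystem M W) (w : List B) (f : Fin w.length → Bool)
    (j : Fin w.length) : W :=
  pp cs w f (j : ℕ) * cs.simple (w.get j) * (pp cs w f (j : ℕ))⁻¹

/-- The color `k_j = #{i < j : u_i ≠ e and s_i^{u_(i)} = s_j^{u_(j)}}` of position `j`. -/
noncomputable def color (cs : CoxeterSystem M W) (w : List B) (f : Fin w.length → Bool)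
    (j : Fin w.length) : ℕ :=
  (Finset.univ.filter (fun i : Fin w.length =>
    (i : ℕ) < (j : ℕ) ∧ f i = true ∧ reflAt cs w f i = reflAt cs w f j)).card

end Deodhar

namespace DeodharAux

variable {B : Type*} {W : Type*} [Group W] {M : CoxeterMatrix B}

local notation "ℤ₂" => ZMod 2

/-- The toggle map on `W × ZMod 2` associated to a simple reflection. -/
noncomputable def dtoggle (cs : CoxeterSystem M W) (i : B) : W × ℤ₂ → W × ℤ₂ :=
  fun p => (cs.simple i * p.1 * cs.simple i, p.2 + if p.1 = cs.simple i then 1 else 0)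

lemma zmod2_add_self (a : ZMod 2) : a + a = 0 := by fin_cases a <;> decide

lemma dtoggle_involutive (cs : CoxeterSystem M W) (i : B) :
    Function.Involutive (dtoggle cs i) := by
  rintro ⟨t, ε⟩
  have hs := cs.simple_mul_simple_self i
  have h1 : cs.simple i * (cs.simple i * t * cs.simple i) * cs.simple i = t := by
    calc cs.simple i * (cs.simple i * t * cs.simple i) * cs.simple i
        = (cs.simple i * cs.simple i) * t * (cs.simple i * cs.simple i) := by group
      _ = t := by rw [hs]; group
  have h2 : (cs.simple i * t * cs.simple i = cs.simple i) ↔ (t = cs.simple i) := by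
    constructor
    · intro h
      have := congrArg (fun x => cs.simple i * x * cs.simple i) h
      rw [h1] at this
      rw [this]
      calc cs.simple i * cs.simple i * cs.simple i = 1 * cs.simple i := by rw [hs]
        _ = cs.simple i := one_mul _
    · intro h
      rw [h]
      calc cs.simple i * cs.simple i * cs.simple i = 1 * cs.simple i := by rw [hs]
        _ = cs.simple i := one_mul _
  simp only [dtoggle, h1, h2]
  refine Prod.ext rfl ?_
  simp only
  by_cases h : t = cs.simple i <;> simp [h, add_assoc, zmod2_add_self]

/-- The permutation of `W × ZMod 2` associated to a simple reflection. -/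
noncomputable def dperm (cs : CoxeterSystem M W) (i : B) : Equiv.Perm (W × ℤ₂) :=
  (dtoggle_involutive cs i).toPerm

lemma dperm_apply (cs : CoxeterSystem M W) (i : B) (t : W) (ε : ℤ₂) :
    dperm cs i (t, ε) = (cs.simple i * t * cs.simple i,
      ε + if t = cs.simple i then 1 else 0) := rfl

lemma rightInvSeq_cons (cs : CoxeterSystem M W) (i : B) (ω : List B) :
    cs.rightInvSeq (i :: ω) =
      ((cs.wordProd ω)⁻¹ * cs.simple i * cs.wordProd ω) :: cs.rightInvSeq ω := rfl

lemma dperm_word (cs : CoxeterSystem M W) (ω : List B) (t : W) (ε : ℤ₂) :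
    (ω.map (dperm cs)).prod (t, ε) =
      (cs.wordProd ω * t * (cs.wordProd ω)⁻¹,
        ε + (((cs.rightInvSeq ω).count t : ℕ) : ℤ₂)) := by
  induction ω generalizing t ε with
  | nil => simp [CoxeterSystem.wordProd_nil]
  | cons i ω ih =>
    rw [List.map_cons, List.prod_cons, Equiv.Perm.mul_apply, ih, dperm_apply,
      rightInvSeq_cons, List.count_cons]
    have hcond : (cs.wordProd ω * t * (cs.wordProd ω)⁻¹ = cs.simple i)
        ↔ ((cs.wordProd ω)⁻¹ * cs.simple i * cs.wordProd ω = t) := by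
      constructor
      · intro h; rw [← h]; group
      · intro h; rw [← h]; group
    refine Prod.ext ?_ ?_
    · simp only [CoxeterSystem.wordProd_cons, mul_inv_rev, cs.inv_simple]
      group
    · simp only
      by_cases h : cs.wordProd ω * t * (cs.wordProd ω)⁻¹ = cs.simple i
      · have h' : ((cs.wordProd ω)⁻¹ * cs.simple i * cs.wordProd ω == t) = true := by
          simp [hcond.mp h]
        rw [if_pos h, h']
        push_cast
        simp only [if_true]
        ring
      · have h' : ((cs.wordProd ω)⁻¹ * cs.simple i * cs.wordProd ω == t) = false := by
          simp [hcond]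
          intro hc
          exact absurd (hcond.mpr hc) h
        rw [if_neg h, h']
        push_cast
        ring


/-- The word `[i, i', i, i', ...]` of length `2 * k`. -/
def altrep (i i' : B) : ℕ → List B
  | 0 => []
  | k+1 => i :: i' :: altrep i i' k

lemma altrep_map_prod {Mo : Type*} [Monoid Mo] (g : B → Mo) (i i' : B) (k : ℕ) :
    ((altrep i i' k).map g).prod = (g i * g i') ^ k := by
  induction k with
  | zero => simp [altrep]
  | succ k ih =>
    rw [altrep, List.map_cons, List.map_cons, List.prod_cons, List.prod_cons, ih,
      pow_succ', mul_assoc]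

lemma wordProd_altrep (cs : CoxeterSystem M W) (i i' : B) (k : ℕ) :
    cs.wordProd (altrep i i' k) = (cs.simple i * cs.simple i') ^ k := by
  induction k with
  | zero => simp [altrep, CoxeterSystem.wordProd_nil]
  | succ k ih =>
    rw [altrep, CoxeterSystem.wordProd_cons, CoxeterSystem.wordProd_cons, ih,
      pow_succ', mul_assoc]

lemma inv_eq_self_of_sq {x : W} (hx : x * x = 1) : x⁻¹ = x :=
  inv_eq_of_mul_eq_one_right hx

lemma conj_zpow_of_conj_inv {x q : W} (hxinv : x⁻¹ = x) (hq : x * q * x = q⁻¹) (j : ℤ) :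
    x * q ^ j * x = q ^ (-j) := by
  have h : x * q ^ j * x⁻¹ = q ^ (-j) := by
    rw [zpow_neg]
    calc x * q ^ j * x⁻¹
        = (MulAut.conj x) (q ^ j) := rfl
      _ = ((MulAut.conj x) q) ^ j := by rw [map_zpow]
      _ = (q⁻¹) ^ j := by
          congr 1
          rw [MulAut.conj_apply, hxinv, hq]
      _ = (q ^ j)⁻¹ := by rw [inv_zpow]
  rwa [hxinv] at h

lemma comm_zpow_of_conj_inv {x q : W} (hx : x * x = 1) (hq : x * q * x = q⁻¹) (j : ℤ) :
    x * q ^ j = q ^ (-j) * x := by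
  have h := conj_zpow_of_conj_inv (inv_eq_self_of_sq hx) hq j
  calc x * q ^ j = (x * q ^ j * x) * x := by rw [mul_assoc, hx, mul_one]
    _ = q ^ (-j) * x := by rw [h]

section AltRis

variable (cs : CoxeterSystem M W) (i i' : B)

lemma dihedral_entries (x y : W) (hx : x * x = 1) (hy : y * y = 1) (k : ℕ) :
    ((y * (x*y)^k)⁻¹ * x * (y * (x*y)^k) = (x*y) ^ (-(2*(k:ℤ)) - 2) * x)
    ∧ (((x*y)^k)⁻¹ * y * ((x*y)^k) = (x*y) ^ (-(2*(k:ℤ)) - 1) * x) := by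
  have hxinv : x⁻¹ = x := inv_eq_self_of_sq hx
  have hyinv : y⁻¹ = y := inv_eq_self_of_sq hy
  have hpinv : (x*y)⁻¹ = y * x := by rw [mul_inv_rev, hxinv, hyinv]
  have hpx : x * (x*y) * x = (x*y)⁻¹ := by
    rw [hpinv]
    calc x * (x*y) * x = (x*x) * (y*x) := by group
      _ = y * x := by rw [hx, one_mul]
  set p := x * y with hp
  have hA : y * x * y = p ^ (-2 : ℤ) * x := by
    have h1 : p ^ (-2 : ℤ) * x = p⁻¹ * p⁻¹ * x := by group
    rw [h1, hpinv]
    calc y * x * y = y*x*y*(x*x) := by rw [hx, mul_one]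
      _ = y*x * (y*x) * x := by group
  have hB : y = p ^ (-1 : ℤ) * x := by
    have h1 : p ^ (-1 : ℤ) * x = p⁻¹ * x := by group
    rw [h1, hpinv]
    calc y = y * (x * x) := by rw [hx, mul_one]
      _ = y * x * x := by group
  constructor
  · calc (y * p^k)⁻¹ * x * (y * p^k)
        = p ^ (-(k:ℤ)) * (y⁻¹ * x * y) * p ^ (k:ℤ) := by
          rw [zpow_natCast]
          group
      _ = p ^ (-(k:ℤ)) * (y * x * y) * p ^ (k:ℤ) := by rw [hyinv]
      _ = p ^ (-(k:ℤ)) * (p ^ (-2:ℤ) * x) * p ^ (k:ℤ) := by rw [hA]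
      _ = p ^ (-(k:ℤ)) * p ^ (-2:ℤ) * (x * p ^ (k:ℤ)) := by group
      _ = p ^ (-(k:ℤ)) * p ^ (-2:ℤ) * (p ^ (-(k:ℤ)) * x) := by
          rw [comm_zpow_of_conj_inv hx hpx (k:ℤ)]
      _ = p ^ (-(2*(k:ℤ)) - 2) * x := by group
  · calc (p^k)⁻¹ * y * (p^k)
        = p ^ (-(k:ℤ)) * y * p ^ (k:ℤ) := by
          rw [zpow_natCast]
          group
      _ = p ^ (-(k:ℤ)) * (p ^ (-1:ℤ) * x) * p ^ (k:ℤ) := by rw [← hB]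
      _ = p ^ (-(k:ℤ)) * p ^ (-1:ℤ) * (x * p ^ (k:ℤ)) := by group
      _ = p ^ (-(k:ℤ)) * p ^ (-1:ℤ) * (p ^ (-(k:ℤ)) * x) := by
          rw [comm_zpow_of_conj_inv hx hpx (k:ℤ)]
      _ = p ^ (-(2*(k:ℤ)) - 1) * x := by group

lemma rightInvSeq_altrep (k : ℕ) :
    cs.rightInvSeq (altrep i i' k) =
      (List.range (2*k)).map
        (fun (n : ℕ) => (cs.simple i * cs.simple i') ^ ((n : ℤ) - 2*k) * cs.simple i) := by
  induction k with
  | zero => simp [altrep]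
  | succ k ih =>
    have h2k : 2 * (k+1) = (2*k) + 1 + 1 := by ring
    simp only [h2k, List.range_succ_eq_map, List.map_cons, List.map_map]
    rw [altrep, rightInvSeq_cons, rightInvSeq_cons, ih]
    have hent := dihedral_entries (cs.simple i) (cs.simple i')
      (cs.simple_mul_simple_self i) (cs.simple_mul_simple_self i') k
    congr 1
    · -- first entry
      rw [CoxeterSystem.wordProd_cons, wordProd_altrep, hent.1]
      congr 1
      push_cast
      ring
    congr 1
    · -- second entry
      rw [wordProd_altrep, hent.2]
      congr 1
      push_cast
      ring
    · -- tail
      apply List.map_congr_left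
      intro n _
      simp only [Function.comp_apply]
      congr 1
      congr 1
      push_cast
      ring

end AltRis


lemma dperm_liftable (cs : CoxeterSystem M W) : CoxeterMatrix.IsLiftable M (dperm cs) := by
  intro i i'
  set m := M.M i i' with hm
  have hpow : ((cs.simple i * cs.simple i') : W) ^ m = 1 := cs.simple_mul_simple_pow i i'
  have h1 : ((altrep i i' m).map (dperm cs)).prod = (dperm cs i * dperm cs i') ^ m :=
    altrep_map_prod (dperm cs) i i' m
  rw [← h1]
  apply Equiv.ext
  rintro ⟨t, ε⟩
  rw [dperm_word, wordProd_altrep, hpow, rightInvSeq_altrep]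
  set p := ((cs.simple i * cs.simple i') : W) with hpdef
  have hm1 : p ^ ((m:ℤ)) = (1:W) := by rw [zpow_natCast, hpow]
  have hf : ∀ n : ℕ, p ^ ((n:ℤ) - 2*(m:ℤ)) = p ^ ((n:ℤ)) := by
    intro n
    calc p ^ ((n:ℤ) - 2*(m:ℤ)) = p ^ ((n:ℤ)) * (p ^ ((m:ℤ))) ^ (-2:ℤ) := by
          rw [← zpow_mul, ← zpow_add]
          congr 1
          ring
      _ = p ^ ((n:ℤ)) := by rw [hm1, one_zpow, mul_one]
  have hmap : (List.range (2*m)).map (fun (n : ℕ) => p ^ ((n:ℤ) - 2*(m:ℤ)) * cs.simple i)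
      = (List.range (2*m)).map (fun (n : ℕ) => p ^ ((n:ℤ)) * cs.simple i) := by
    apply List.map_congr_left
    intro n _
    rw [hf]
  have hsplit : (List.range (2*m)).map (fun (n : ℕ) => p ^ ((n:ℤ)) * cs.simple i)
      = ((List.range m).map (fun (n : ℕ) => p ^ ((n:ℤ)) * cs.simple i))
        ++ ((List.range m).map (fun (n : ℕ) => p ^ ((n:ℤ)) * cs.simple i)) := by
    rw [two_mul, List.range_add, List.map_append, List.map_map]
    congr 1
    apply List.map_congr_left
    intro n _
    simp only [Function.comp_apply]
    congr 1
    push_cast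
    rw [zpow_add, hm1, one_mul]
  rw [hmap, hsplit]
  have hcount : (List.count t
      (((List.range m).map (fun (n : ℕ) => p ^ ((n:ℤ)) * cs.simple i))
        ++ ((List.range m).map (fun (n : ℕ) => p ^ ((n:ℤ)) * cs.simple i))) : ℕ)
      = 2 * List.count t ((List.range m).map (fun (n : ℕ) => p ^ ((n:ℤ)) * cs.simple i)) := by
    rw [List.count_append]
    ring
  rw [hcount]
  refine Prod.ext ?_ ?_
  · simp
  · simp only [Equiv.Perm.one_apply]
    push_cast
    have h2 : (2 : ZMod 2) = 0 := by decide
    rw [h2, zero_mul, add_zero]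

/-- The permutation representation of `W` on `W × ZMod 2`. -/
noncomputable def drep (cs : CoxeterSystem M W) : W →* Equiv.Perm (W × ZMod 2) :=
  cs.lift ⟨dperm cs, dperm_liftable cs⟩

/-- The parity invariant `n(w, t)`. -/
noncomputable def nn (cs : CoxeterSystem M W) (w t : W) : ZMod 2 :=
  (drep cs w (t, 0)).2

lemma drep_wordProd (cs : CoxeterSystem M W) (ω : List B) :
    drep cs (cs.wordProd ω) = (ω.map (dperm cs)).prod := by
  rw [CoxeterSystem.wordProd, map_list_prod, List.map_map]
  congr 1
  apply List.map_congr_left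
  intro j _
  simp only [Function.comp_apply]
  exact cs.lift_apply_simple (dperm_liftable cs) j

lemma nn_wordProd (cs : CoxeterSystem M W) (ω : List B) (t : W) :
    nn cs (cs.wordProd ω) t = (((cs.rightInvSeq ω).count t : ℕ) : ZMod 2) := by
  rw [nn, drep_wordProd, dperm_word, zero_add]

lemma drep_apply (cs : CoxeterSystem M W) (w t : W) (ε : ZMod 2) :
    drep cs w (t, ε) = (w * t * w⁻¹, ε + nn cs w t) := by
  obtain ⟨ω, rfl⟩ := cs.wordProd_surjective w
  rw [drep_wordProd, dperm_word, nn_wordProd]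

lemma nn_mul (cs : CoxeterSystem M W) (u v t : W) :
    nn cs (u * v) t = nn cs u (v * t * v⁻¹) + nn cs v t := by
  have h : drep cs (u * v) (t, 0) = drep cs u (drep cs v (t, 0)) := by
    rw [map_mul]
    rfl
  rw [nn, h, drep_apply cs v t 0, zero_add, drep_apply]
  simp only
  rw [add_comm]

lemma nn_simple (cs : CoxeterSystem M W) (j : B) (t : W) :
    nn cs (cs.simple j) t = if t = cs.simple j then 1 else 0 := by
  have h : cs.simple j = cs.wordProd [j] := by
    rw [CoxeterSystem.wordProd_singleton]
  have h0 : nn cs (cs.simple j) t = ((List.count t [cs.simple j] : ℕ) : ZMod 2) := by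
    conv_lhs => rw [h]
    rw [nn_wordProd, CoxeterSystem.rightInvSeq_singleton]
  rw [h0]
  by_cases ht : t = cs.simple j
  · rw [if_pos ht, ht]
    simp
  · rw [if_neg ht]
    have : List.count t [cs.simple j] = 0 := by
      simp [List.count_singleton]
      intro hc
      exact ht hc.symm
    rw [this]
    simp


lemma nn_conj_step (cs : CoxeterSystem M W) (i : B) (t' : W) (h : nn cs t' t' = 1) :
    nn cs (cs.simple i * t' * cs.simple i) (cs.simple i * t' * cs.simple i) = 1 := by
  have hs : cs.simple i * cs.simple i = 1 := cs.simple_mul_simple_self i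
  have h4 : cs.simple i * (cs.simple i * t' * cs.simple i) * (cs.simple i)⁻¹ = t' := by
    rw [cs.inv_simple]
    calc cs.simple i * (cs.simple i * t' * cs.simple i) * cs.simple i
        = (cs.simple i * cs.simple i) * t' * (cs.simple i * cs.simple i) := by group
      _ = 1 * t' * 1 := by rw [hs]
      _ = t' := by group
  have hiff : (cs.simple i * t' * cs.simple i = cs.simple i) ↔ (t' = cs.simple i) := by
    constructor
    · intro hc
      have := h4
      rw [hc, cs.inv_simple] at this
      rw [← this, hs, one_mul]
    · intro hc
      rw [hc, hs, one_mul]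
  have e1 := nn_mul cs (cs.simple i * t') (cs.simple i) (cs.simple i * t' * cs.simple i)
  have e2 := nn_mul cs (cs.simple i) t' t'
  have e3 : t' * t' * t'⁻¹ = t' := by group
  rw [e3] at e2
  rw [h4] at e1
  rw [e1, e2, h, nn_simple, nn_simple]
  by_cases hc : t' = cs.simple i
  · rw [if_pos hc, if_pos (hiff.mpr hc)]
    decide
  · rw [if_neg hc, if_neg (fun hx => hc (hiff.mp hx))]
    decide

lemma nn_conj_refl (cs : CoxeterSystem M W) :
    ∀ χ : List B, ∀ j : B,
      nn cs (cs.wordProd χ * cs.simple j * (cs.wordProd χ)⁻¹)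
        (cs.wordProd χ * cs.simple j * (cs.wordProd χ)⁻¹) = 1 := by
  intro χ
  induction χ with
  | nil =>
    intro j
    simp only [CoxeterSystem.wordProd_nil, one_mul, inv_one, mul_one]
    rw [nn_simple, if_pos rfl]
  | cons i χ' ih =>
    intro j
    have hT : cs.wordProd (i :: χ') * cs.simple j * (cs.wordProd (i :: χ'))⁻¹
        = cs.simple i * (cs.wordProd χ' * cs.simple j * (cs.wordProd χ')⁻¹) * cs.simple i := by
      rw [CoxeterSystem.wordProd_cons, mul_inv_rev, cs.inv_simple]
      group
    rw [hT]
    exact nn_conj_step cs i _ (ih j)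

lemma nn_refl_self (cs : CoxeterSystem M W) {t : W} (ht : cs.IsReflection t) :
    nn cs t t = 1 := by
  obtain ⟨x, j, rfl⟩ := ht
  obtain ⟨χ, rfl⟩ := cs.wordProd_surjective x
  exact nn_conj_refl cs χ j

lemma nn_one (cs : CoxeterSystem M W) (t : W) : nn cs 1 t = 0 := by
  rw [nn, map_one]
  rfl

lemma zmod2_ne_one (a : ZMod 2) (h : ¬ a = 1) : a = 0 := by
  fin_cases a
  · rfl
  · exact absurd rfl h

/-- The key parity theorem: `t` is a right inversion of `w` iff `n(w,t)` is odd. -/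
theorem length_mul_reflection_lt_iff_nn (cs : CoxeterSystem M W) :
    ∀ n (w : W), cs.length w = n → ∀ t : W, cs.IsReflection t →
      (cs.length (w * t) < cs.length w ↔ nn cs w t = 1) := by
  intro n
  induction n using Nat.strong_induction_on with
  | _ n ihn =>
    intro w hw t ht
    by_cases hw1 : w = 1
    · subst hw1
      rw [nn_one]
      simp only [CoxeterSystem.length_one, one_mul]
      constructor
      · omega
      · intro h
        exact absurd h.symm one_ne_zero
    · constructor
      · -- forward: if ℓ(w t) < ℓ w then nn w t = 1
        intro h
        have hv : cs.length (w * t) < n := hw ▸ h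
        have ihv := ihn (cs.length (w * t)) hv (w * t) rfl t ht
        have hvt : w * t * t = w := by
          rw [mul_assoc, ht.mul_self, mul_one]
        rw [hvt] at ihv
        have hnv : nn cs (w * t) t = 0 := by
          apply zmod2_ne_one
          intro hcon
          have := ihv.mpr hcon
          omega
        have hcomp : nn cs w t = nn cs (w * t) (t * t * t⁻¹) + nn cs t t := by
          conv_lhs => rw [← hvt]
          rw [nn_mul]
        rw [ht.mul_self, one_mul, CoxeterSystem.IsReflection.inv ht] at hcomp
        rw [hcomp, hnv, nn_refl_self cs ht, zero_add]
      · -- backward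
        intro hnn
        obtain ⟨i, hi⟩ := cs.exists_leftDescent_of_ne_one hw1
        have hs : cs.simple i * cs.simple i = 1 := cs.simple_mul_simple_self i
        set w' := cs.simple i * w with hw'
        have hww' : w = cs.simple i * w' := by
          rw [hw', ← mul_assoc, hs, one_mul]
        have hlen' : cs.length w' < cs.length w := hi
        have hdec : nn cs w t = (if w' * t * w'⁻¹ = cs.simple i then 1 else 0)
            + nn cs w' t := by
          conv_lhs => rw [hww']
          rw [nn_mul, nn_simple]
        by_cases hcase : w' * t * w'⁻¹ = cs.simple i
        · -- then w * t = w'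
          have hwt : w * t = w' := by
            have h1 : w' * t = cs.simple i * w' := by
              rw [← hcase]
              group
            rw [hww', mul_assoc, h1, ← mul_assoc, hs, one_mul]
          rw [hwt]
          exact hlen'
        · have hnn' : nn cs w' t = 1 := by
            rw [hdec, if_neg hcase, zero_add] at hnn
            exact hnn
          have ih' := ihn (cs.length w') (hw ▸ hlen') w' rfl t ht
          have hlt : cs.length (w' * t) < cs.length w' := ih'.mpr hnn'
          have hb : cs.length (w * t) ≤ cs.length w' := by
            have h1 : w * t = cs.simple i * (w' * t) := by
              rw [hww', mul_assoc]
            have h2 : cs.length (cs.simple i * (w' * t)) ≤ cs.length (w' * t) + 1 := by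
              have := cs.length_mul_le (cs.simple i) (w' * t)
              rw [cs.length_simple] at this
              omega
            rw [h1]
            omega
          omega


theorem length_smul_lt_iff_odd_count (cs : CoxeterSystem M W) (ω : List B) (t : W)
    (ht : cs.IsReflection t) :
    cs.length (t * cs.wordProd ω) < cs.length (cs.wordProd ω)
      ↔ Odd ((cs.leftInvSeq ω).count t) := by
  have h := length_mul_reflection_lt_iff_nn cs (cs.length (cs.wordProd ω.reverse))
    (cs.wordProd ω.reverse) rfl t ht
  rw [nn_wordProd, CoxeterSystem.rightInvSeq_reverse, List.count_reverse,
    CoxeterSystem.wordProd_reverse] at h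
  have h1 : cs.length ((cs.wordProd ω)⁻¹ * t) = cs.length (t * cs.wordProd ω) := by
    rw [← cs.length_inv ((cs.wordProd ω)⁻¹ * t), mul_inv_rev, inv_inv,
      CoxeterSystem.IsReflection.inv ht]
  have h2 : cs.length ((cs.wordProd ω)⁻¹) = cs.length (cs.wordProd ω) := cs.length_inv _
  rw [h1, h2, ZMod.natCast_eq_one_iff_odd] at h
  exact h

lemma card_filter_lt_succ {n : ℕ} (P : Fin n → Prop) [DecidablePred P] (j : ℕ) (hj : j < n) :
    (Finset.univ.filter (fun i : Fin n => (i:ℕ) < j + 1 ∧ P i)).card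
      = (Finset.univ.filter (fun i : Fin n => (i:ℕ) < j ∧ P i)).card
        + (if P ⟨j, hj⟩ then 1 else 0) := by
  by_cases hP : P ⟨j, hj⟩
  · rw [if_pos hP]
    have hins : (Finset.univ.filter (fun i : Fin n => (i:ℕ) < j + 1 ∧ P i))
        = insert ⟨j, hj⟩ (Finset.univ.filter (fun i : Fin n => (i:ℕ) < j ∧ P i)) := by
      ext i
      simp only [Finset.mem_filter, Finset.mem_univ, true_and, Finset.mem_insert]
      constructor
      · rintro ⟨hlt, hPi⟩
        rcases Nat.lt_succ_iff_lt_or_eq.mp hlt with h | h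
        · exact Or.inr ⟨h, hPi⟩
        · exact Or.inl (Fin.ext h)
      · rintro (rfl | ⟨hlt, hPi⟩)
        · exact ⟨Nat.lt_succ_self j, hP⟩
        · exact ⟨Nat.lt_succ_of_lt hlt, hPi⟩
    rw [hins, Finset.card_insert_of_notMem]
    simp
  · rw [if_neg hP, add_zero]
    congr 1
    ext i
    simp only [Finset.mem_filter, Finset.mem_univ, true_and]
    constructor
    · rintro ⟨hlt, hPi⟩
      rcases Nat.lt_succ_iff_lt_or_eq.mp hlt with h | h
      · exact ⟨h, hPi⟩
      · have hij : i = ⟨j, hj⟩ := Fin.ext h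
        exact absurd (hij ▸ hPi) hP
    · rintro ⟨hlt, hPi⟩
      exact ⟨Nat.lt_succ_of_lt hlt, hPi⟩

open Deodhar

section Glue

variable (cs : CoxeterSystem M W) (w : List B) (f : Fin w.length → Bool)

lemma pp_zero : pp cs w f 0 = 1 := by simp [pp]

lemma finRange_getElem (j : Fin w.length) :
    (List.finRange w.length)[(j:ℕ)]'(by simpa using j.isLt) = j := by
  rw [List.getElem_finRange]
  apply Fin.ext
  simp

lemma pp_succ (j : Fin w.length) :
    pp cs w f ((j:ℕ)+1)
      = pp cs w f (j:ℕ) * (if f j then cs.simple (w.get j) else 1) := by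
  unfold pp
  rw [List.take_succ]
  have hj : (j:ℕ) < (List.finRange w.length).length := by simpa using j.isLt
  rw [List.getElem?_eq_getElem hj, finRange_getElem, Option.toList_some,
    List.map_append, List.prod_append]
  simp

/-- The word consisting of the used letters among the first `j` positions. -/
def wu (j : ℕ) : List B :=
  ((((List.finRange w.length).take j)).filter (fun i => f i)).map w.get

lemma wu_succ (j : Fin w.length) :
    wu w f ((j:ℕ)+1)
      = if f j then (wu w f (j:ℕ)).concat (w.get j) else wu w f (j:ℕ) := by
  unfold wu
  rw [List.take_succ]
  have hj : (j:ℕ) < (List.finRange w.length).length := by simpa using j.isLt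
  rw [List.getElem?_eq_getElem hj, finRange_getElem, Option.toList_some,
    List.filter_append, List.map_append]
  by_cases hf : f j
  · rw [if_pos hf]
    have h1 : List.filter (fun i => f i) [j] = [j] := by simp [hf]
    rw [h1]
    simp [List.concat_eq_append]
  · rw [if_neg hf]
    have h1 : List.filter (fun i => f i) [j] = [] := by
      simp [hf]
    rw [h1]
    simp

lemma wordProd_wu : ∀ j : ℕ, j ≤ w.length → cs.wordProd (wu w f j) = pp cs w f j := by
  intro j
  induction j with
  | zero =>
    intro _
    rw [pp_zero]
    unfold wu
    simp [CoxeterSystem.wordProd_nil]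
  | succ j ih =>
    intro hj
    have hj' : j < w.length := hj
    have hco : ((⟨j, hj'⟩ : Fin w.length) : ℕ) = j := rfl
    rw [← hco, wu_succ w f ⟨j, hj'⟩, pp_succ cs w f ⟨j, hj'⟩, hco]
    by_cases hf : f ⟨j, hj'⟩
    · rw [if_pos hf, if_pos hf, CoxeterSystem.wordProd_concat, ih (Nat.le_of_lt hj')]
    · rw [if_neg hf, if_neg hf, ih (Nat.le_of_lt hj'), mul_one]

lemma count_singleton' (t a : W) : List.count t [a] = if a = t then 1 else 0 := by
  by_cases h : a = t
  · rw [if_pos h, h]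
    simp
  · rw [if_neg h]
    rw [List.count_eq_zero]
    simp only [List.mem_singleton]
    exact fun hc => h hc.symm

lemma count_wu (t : W) : ∀ j : ℕ, j ≤ w.length →
    ((cs.leftInvSeq (wu w f j)).count t)
      = (Finset.univ.filter (fun i : Fin w.length =>
          (i:ℕ) < j ∧ f i = true ∧ reflAt cs w f i = t)).card := by
  intro j
  induction j with
  | zero =>
    intro _
    have h1 : wu w f 0 = [] := by unfold wu; simp
    have h2 : (Finset.univ.filter (fun i : Fin w.length =>
        (i:ℕ) < 0 ∧ f i = true ∧ reflAt cs w f i = t)) = ∅ := by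
      apply Finset.filter_eq_empty_iff.mpr
      intro i _
      simp
    rw [h1, h2]
    simp
  | succ j ih =>
    intro hj
    have hj' : j < w.length := hj
    have hco : ((⟨j, hj'⟩ : Fin w.length) : ℕ) = j := rfl
    have hcard := card_filter_lt_succ
      (fun i : Fin w.length => f i = true ∧ reflAt cs w f i = t) j hj'
    have hsplit : (Finset.univ.filter (fun i : Fin w.length =>
          (i:ℕ) < j + 1 ∧ f i = true ∧ reflAt cs w f i = t)).card
        = (Finset.univ.filter (fun i : Fin w.length =>
          (i:ℕ) < j ∧ f i = true ∧ reflAt cs w f i = t)).card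
          + (if (f ⟨j, hj'⟩ = true ∧ reflAt cs w f ⟨j, hj'⟩ = t) then 1 else 0) := hcard
    rw [hsplit, ← ih (Nat.le_of_lt hj')]
    have hwu : wu w f (j+1) = if f ⟨j, hj'⟩ then (wu w f j).concat (w.get ⟨j, hj'⟩)
        else wu w f j := wu_succ w f ⟨j, hj'⟩
    rw [hwu]
    by_cases hf : f ⟨j, hj'⟩
    · rw [if_pos hf, CoxeterSystem.leftInvSeq_concat,
        wordProd_wu cs w f j (Nat.le_of_lt hj')]
      have hentry : pp cs w f j * cs.simple (w.get ⟨j, hj'⟩) * (pp cs w f j)⁻¹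
          = reflAt cs w f ⟨j, hj'⟩ := rfl
      rw [hentry, List.concat_eq_append, List.count_append, count_singleton']
      congr 1
      by_cases hR : reflAt cs w f ⟨j, hj'⟩ = t
      · rw [if_pos hR, if_pos ⟨hf, hR⟩]
      · rw [if_neg hR, if_neg (fun hc => hR hc.2)]
    · rw [if_neg hf]
      have hzero : (if (f ⟨j, hj'⟩ = true ∧ reflAt cs w f ⟨j, hj'⟩ = t) then 1 else 0) = 0 := by
        rw [if_neg (fun hc => hf hc.1)]
      rw [hzero, add_zero]

lemma distinguished_cond_iff (j : Fin w.length) :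
    (cs.length (pp cs w f ((j : ℕ) + 1))
        ≤ cs.length (pp cs w f (j : ℕ) * cs.simple (w.get j)))
      ↔ (f j = false → Even (color cs w f j)) := by
  by_cases hf : f j
  · constructor
    · intro _ hfalse
      rw [hf] at hfalse
      exact absurd hfalse (by simp)
    · intro _
      rw [pp_succ cs w f j, if_pos hf]
  · have hf' : f j = false := by
      simpa using hf
    rw [pp_succ cs w f j, if_neg hf, mul_one]
    have hrefl : cs.IsReflection (reflAt cs w f j) :=
      ⟨pp cs w f (j:ℕ), w.get j, rfl⟩
    have hkey := length_smul_lt_iff_odd_count cs (wu w f (j:ℕ)) (reflAt cs w f j) hrefl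
    rw [wordProd_wu cs w f (j:ℕ) (Nat.le_of_lt j.isLt)] at hkey
    have ht : reflAt cs w f j * pp cs w f (j:ℕ) = pp cs w f (j:ℕ) * cs.simple (w.get j) := by
      unfold reflAt
      group
    rw [ht] at hkey
    have hcount : (cs.leftInvSeq (wu w f (j:ℕ))).count (reflAt cs w f j)
        = color cs w f j := by
      rw [count_wu cs w f (reflAt cs w f j) (j:ℕ) (Nat.le_of_lt j.isLt)]
      rfl
    rw [hcount] at hkey
    constructor
    · intro hle _
      rw [← Nat.not_odd_iff_even]
      intro hodd
      have := hkey.mpr hodd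
      omega
    · intro hev
      have heven := hev hf'
      by_contra hlt
      push_neg at hlt
      exact (Nat.not_odd_iff_even.mpr heven) (hkey.mp hlt)

end Glue

end DeodharAux

open Deodhar in

/-- In a finite Coxeter group `W`, a subword `u` of a word `w = (s_1,...,s_m)`
is distinguished if and only if every colored reflection in `inv_e(u)` has even color,
i.e., for every skipped position `j` (`f j = false`), the color `k_j` is even. -/
theorem distinguished_iff_even_colors
    {B : Type*} {W : Type*} [Group W] [Finite W] {M : CoxeterMatrix B}
    (cs : CoxeterSystem M W) (w : List B) (f : Fin w.length → Bool) :
    Distinguished cs w f ↔ ∀ j : Fin w.length, f j = false → Even (color cs w f j) := by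
  constructor
  · intro hd j hfalse
    exact (DeodharAux.distinguished_cond_iff cs w f j).mp (hd j) hfalse
  · intro h j
    exact (DeodharAux.distinguished_cond_iff cs w f j).mpr (h j)
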